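/- arXiv:math/0303288 — 2 statements merged into one kernel-verified Lean document; each statement's English description precedes it below -/
import Mathlib

section
/- Vanishing rates at the maximizer of the penalization function: Let u, v : ℝ × [0,S] → ℝ be bounded and uniformly continuous, λ > 0 with sup_{0≤t≤S, x∈ℝ} [u(x,t) − v(x,t) − 2λt] ≥ 0, and for ε > 0 let Φ_ε(x,t,y,s) = u(x,t) − v(y,s) − λ(t+s) − ε(x² + y²) − ((t−s)² + (|x|−|y|)²)/ε² − (1/ε)(1/x² + 1/y²) − ε³/((|x|−|y|)² + ε²) − Kχ(x,y), where K = 2(max|u| + max|v|) and χ(x,y) = 1 if x ≤ 0 or y ≤ 0 and χ(x,y) = 0 otherwise. If (x_ε, t_ε, y_ε, s_ε) denotes a global maximum point of Φ_ε over (ℝ × [0,S])², then as ε → 0: (1/ε)(1/x_ε² − 1/y_ε²) → 0, (t_ε − s_ε)/ε → 0, (x_ε − y_ε)/ε → 0, and ε³/((x_ε − y_ε)² + ε²) → 0. -/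
open Filter Topology MeasureTheory

noncomputable section

/-- Assumption (A.1): Lipschitz continuity of the Hamiltonian `H(p,a,g)`. -/
def HypA1 (H : ℝ → ℝ → ℝ → ℝ) : Prop :=
  ∃ C : ℝ, 0 < C ∧
    (∀ p a a' g g' : ℝ, |H p a g - H p a' g'| ≤ C * (|g - g'| + |a - a'|) * (1 + |p|)) ∧
    (∀ p q a g : ℝ, |H p a g - H q a g| ≤ C * |p - q|)

/-- Assumption (A.2): `H` is nondecreasing in the coefficients `a` and `g`. -/
def HypA2 (H : ℝ → ℝ → ℝ → ℝ) : Prop :=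
  ∀ p a g : ℝ, 0 ≤ deriv (fun b => H p b g) a ∧ 0 ≤ deriv (fun h => H p a h) g

/-- Assumption (A.3): `H_p(0,a,g) = 0` and `H_{pp}(0,a,g) < 0`. -/
def HypA3 (H : ℝ → ℝ → ℝ → ℝ) : Prop :=
  ∀ a g : ℝ, deriv (fun p => H p a g) 0 = 0 ∧ iteratedDeriv 2 (fun p => H p a g) 0 < 0

/-- Assumption (A.4): `p ↦ H(p,a,g)` is even, strictly increasing on `(-∞,0)`,
strictly decreasing on `(0,∞)`. -/
def HypA4 (H : ℝ → ℝ → ℝ → ℝ) : Prop :=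
  ∀ a g : ℝ, (∀ p : ℝ, H (-p) a g = H p a g) ∧
    StrictMonoOn (fun p => H p a g) (Set.Iio 0) ∧
    StrictAntiOn (fun p => H p a g) (Set.Ioi 0)

/-- Assumption (A.5): `|H(p,a,g)|/p ≥ C > 0` as `p → ∞`, uniformly in `a`, `g`. -/
def HypA5 (H : ℝ → ℝ → ℝ → ℝ) : Prop :=
  ∃ C : ℝ, 0 < C ∧ ∀ a g : ℝ, ∀ᶠ p in atTop, C ≤ |H p a g| / p

/-- Assumptions (A.6) and (A.8) for the coefficient `a`: piecewise `C¹` with the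
finitely many jump discontinuities (of `a` and `a'`) located at `xs 0 < … < xs (M-1)`,
one-sided limits everywhere, bounded variation, and bounded derivative away from
the jump points. -/
structure HypCoeffA (a : ℝ → ℝ) (M : ℕ) (xs : Fin M → ℝ) : Prop where
  mono : StrictMono xs
  smooth : ∀ x : ℝ, x ∉ Set.range xs → ContDiffAt ℝ 1 a x
  leftLim : ∀ x : ℝ, ∃ L : ℝ, Tendsto a (𝓝[<] x) (𝓝 L)
  rightLim : ∀ x : ℝ, ∃ L : ℝ, Tendsto a (𝓝[>] x) (𝓝 L)
  bv : BoundedVariationOn a Set.univ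
  derivBdd : ∃ K : ℝ, ∀ x : ℝ, x ∉ Set.range xs → |deriv a x| ≤ K

/-- Assumptions (A.7) and (A.8) for the coefficient `g` (defined on `ℝ⁺`):
piecewise continuous with the finitely many jump discontinuities (of `g` and `g'`)
located at `0 < ts 0 < … < ts (N-1)`, one-sided limits, bounded variation on `[0,∞)`,
and bounded derivative away from the jump points. -/
structure HypCoeffG (g : ℝ → ℝ) (N : ℕ) (ts : Fin N → ℝ) : Prop where
  mono : StrictMono ts
  pos : ∀ i : Fin N, 0 < ts i
  cont : ∀ t : ℝ, 0 < t → t ∉ Set.range ts → ContinuousAt g t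
  leftLim : ∀ t : ℝ, 0 < t → ∃ L : ℝ, Tendsto g (𝓝[<] t) (𝓝 L)
  rightLim : ∀ t : ℝ, 0 ≤ t → ∃ L : ℝ, Tendsto g (𝓝[>] t) (𝓝 L)
  bv : BoundedVariationOn g (Set.Ici 0)
  derivBdd : ∃ K : ℝ, ∀ t : ℝ, 0 < t → t ∉ Set.range ts → |deriv g t| ≤ K

/-- `f : ℝ → ℝ` is bounded and uniformly continuous. -/
def BUC (f : ℝ → ℝ) : Prop := (∃ K : ℝ, ∀ x : ℝ, |f x| ≤ K) ∧ UniformContinuous f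

/-- `u : Π_T = ℝ × [0,T] → ℝ` is bounded and uniformly continuous on the strip. -/
def BUCOn (T : ℝ) (u : ℝ → ℝ → ℝ) : Prop :=
  (∃ K : ℝ, ∀ x t : ℝ, t ∈ Set.Icc 0 T → |u x t| ≤ K) ∧
  UniformContinuousOn (fun z : ℝ × ℝ => u z.1 z.2) (Set.univ ×ˢ Set.Icc 0 T)

/-- Spatial partial derivative of a test function. -/
def PartialX (φ : ℝ → ℝ → ℝ) (x t : ℝ) : ℝ := deriv (fun y => φ y t) x

/-- Temporal partial derivative of a test function. -/
def PartialT (φ : ℝ → ℝ → ℝ) (x t : ℝ) : ℝ := deriv (fun s => φ x s) t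

/-- Viscosity subsolution of `u_t + H(u_x, a(x), g(t)) = 0` on `Π_T`, with the
discontinuities of the coefficients treated via one-sided limits `a(x₀⁻)`, `a(x₀⁺)`,
`g(t₀⁻)` (Definition 1.1). -/
def IsViscositySubsolution (H : ℝ → ℝ → ℝ → ℝ) (a g : ℝ → ℝ) (T : ℝ)
    (u : ℝ → ℝ → ℝ) : Prop :=
  ∀ φ : ℝ → ℝ → ℝ, ContDiff ℝ 1 (fun z : ℝ × ℝ => φ z.1 z.2) →
    ∀ x₀ t₀ : ℝ, t₀ ∈ Set.Icc 0 T →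
      IsLocalMaxOn (fun z : ℝ × ℝ => u z.1 z.2 - φ z.1 z.2)
        (Set.univ ×ˢ Set.Icc 0 T) (x₀, t₀) →
      ∀ aL aR gL : ℝ,
        Tendsto a (𝓝[<] x₀) (𝓝 aL) → Tendsto a (𝓝[>] x₀) (𝓝 aR) →
        Tendsto g (𝓝[<] t₀) (𝓝 gL) →
        PartialT φ x₀ t₀ +
          min (H (PartialX φ x₀ t₀) aL gL) (H (PartialX φ x₀ t₀) aR gL) ≤ 0

/-- Viscosity supersolution (Definition 1.1). -/
def IsViscositySupersolution (H : ℝ → ℝ → ℝ → ℝ) (a g : ℝ → ℝ) (T : ℝ)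
    (u : ℝ → ℝ → ℝ) : Prop :=
  ∀ φ : ℝ → ℝ → ℝ, ContDiff ℝ 1 (fun z : ℝ × ℝ => φ z.1 z.2) →
    ∀ x₀ t₀ : ℝ, t₀ ∈ Set.Icc 0 T →
      IsLocalMinOn (fun z : ℝ × ℝ => u z.1 z.2 - φ z.1 z.2)
        (Set.univ ×ˢ Set.Icc 0 T) (x₀, t₀) →
      ∀ aL aR gL : ℝ,
        Tendsto a (𝓝[<] x₀) (𝓝 aL) → Tendsto a (𝓝[>] x₀) (𝓝 aR) →
        Tendsto g (𝓝[<] t₀) (𝓝 gL) →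
        0 ≤ PartialT φ x₀ t₀ +
          max (H (PartialX φ x₀ t₀) aL gL) (H (PartialX φ x₀ t₀) aR gL)

/-- Viscosity solution of the Cauchy problem (1.1) on `Π_T`, with initial datum `u0`:
a bounded uniformly continuous function which is both a viscosity subsolution and a
viscosity supersolution. -/
def IsViscositySolution (H : ℝ → ℝ → ℝ → ℝ) (a g : ℝ → ℝ) (T : ℝ)
    (u : ℝ → ℝ → ℝ) (u0 : ℝ → ℝ) : Prop :=
  BUCOn T u ∧ (∀ x : ℝ, u x 0 = u0 x) ∧
    IsViscositySubsolution H a g T u ∧ IsViscositySupersolution H a g T u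

/-- The Temple singular mapping `Ψ(p,a,g) = sign(p)(H(p,a,g) - H(0,a,g))/H(0,a,g)`. -/
def TempleMap (H : ℝ → ℝ → ℝ → ℝ) (p a g : ℝ) : ℝ :=
  Real.sign p * (H p a g - H 0 a g) / H 0 a g

/-- Entropy solution of the conservation law `p_t + H(p,a(x),g(t))_x = 0` on `Π_T`
(Definition 1.2).  Here `xs` are the jump points of `a`, and `aL m`, `aR m` are the
one-sided limits `a(x_m⁻)`, `a(x_m⁺)`. -/
structure IsEntropySolution (H : ℝ → ℝ → ℝ → ℝ) (a g : ℝ → ℝ) (T : ℝ)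
    (M : ℕ) (xs : Fin M → ℝ) (aL aR : Fin M → ℝ)
    (p : ℝ → ℝ → ℝ) (p0 : ℝ → ℝ) : Prop where
  meas : Measurable (fun z : ℝ × ℝ => p z.1 z.2)
  mem_L1 : IntegrableOn (fun z : ℝ × ℝ => p z.1 z.2) (Set.univ ×ˢ Set.Icc 0 T)
  mem_Linf : ∃ K : ℝ, ∀ x t : ℝ, t ∈ Set.Icc 0 T → |p x t| ≤ K
  bv_psi : ∀ t ∈ Set.Icc (0:ℝ) T,
    BoundedVariationOn (fun x => TempleMap H (p x t) (a x) (g t)) Set.univ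
  lip_L1 : ∃ L : ℝ, ∀ t ∈ Set.Icc (0:ℝ) T, ∀ t' ∈ Set.Icc (0:ℝ) T,
    (∫ x : ℝ, |p x t - p x t'|) ≤ L * |t - t'|
  weak : ∀ φ : ℝ → ℝ → ℝ, ContDiff ℝ 1 (fun z : ℝ × ℝ => φ z.1 z.2) →
    HasCompactSupport (fun z : ℝ × ℝ => φ z.1 z.2) →
    (∫ x : ℝ, ∫ t in Set.Icc (0:ℝ) T,
        (p x t * PartialT φ x t + H (p x t) (a x) (g t) * PartialX φ x t))
      + (∫ x : ℝ, φ x 0 * p0 x) = 0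
  entropy : ∀ c : ℝ, ∀ φ : ℝ → ℝ → ℝ, ContDiff ℝ 1 (fun z : ℝ × ℝ => φ z.1 z.2) →
    HasCompactSupport (fun z : ℝ × ℝ => φ z.1 z.2) → (∀ x t : ℝ, 0 ≤ φ x t) →
    0 ≤ (∫ x : ℝ, ∫ t in Set.Icc (0:ℝ) T,
          (|p x t - c| * PartialT φ x t
            + Real.sign (p x t - c) * (H (p x t) (a x) (g t) - H c (a x) (g t))
                * PartialX φ x t))
        - (∫ x : ℝ, ∫ t in Set.Icc (0:ℝ) T,
            Real.sign (p x t - c) * deriv (fun b => H c b (g t)) (a x)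
              * deriv a x * φ x t)
        + ∑ m : Fin M, ∫ t in Set.Icc (0:ℝ) T,
            |H c (aR m) (g t) - H c (aL m) (g t)| * φ (xs m) t

/-- The indicator `χ(x,y) = 1` if `x ≤ 0` or `y ≤ 0`, `0` otherwise. -/
def chiInd (x y : ℝ) : ℝ := if x ≤ 0 ∨ y ≤ 0 then 1 else 0

/-- The penalization function `Φ_ε` of (2.6). -/
def PhiPen (u v : ℝ → ℝ → ℝ) (lam K ε : ℝ) (x t y s : ℝ) : ℝ :=
  u x t - v y s - lam * (t + s) - ε * (x ^ 2 + y ^ 2)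
    - ((t - s) ^ 2 + (|x| - |y|) ^ 2) / ε ^ 2
    - (1 / ε) * (1 / x ^ 2 + 1 / y ^ 2)
    - ε ^ 3 / ((|x| - |y|) ^ 2 + ε ^ 2)
    - K * chiInd x y

/-- (A.1) for a Hamiltonian `H(p,a)` with `g` constant (suppressed). -/
def HypA1' (H : ℝ → ℝ → ℝ) : Prop :=
  ∃ C : ℝ, 0 < C ∧
    (∀ p a a' : ℝ, |H p a - H p a'| ≤ C * |a - a'| * (1 + |p|)) ∧
    (∀ p q a : ℝ, |H p a - H q a| ≤ C * |p - q|)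

/-- (A.3) for `H(p,a)`. -/
def HypA3' (H : ℝ → ℝ → ℝ) : Prop :=
  ∀ a : ℝ, deriv (fun p => H p a) 0 = 0 ∧ iteratedDeriv 2 (fun p => H p a) 0 < 0

/-- (A.4) for `H(p,a)`. -/
def HypA4' (H : ℝ → ℝ → ℝ) : Prop :=
  ∀ a : ℝ, (∀ p : ℝ, H (-p) a = H p a) ∧
    StrictMonoOn (fun p => H p a) (Set.Iio 0) ∧
    StrictAntiOn (fun p => H p a) (Set.Ioi 0)

/-- (A.5) for `H(p,a)`. -/
def HypA5' (H : ℝ → ℝ → ℝ) : Prop :=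
  ∃ C : ℝ, 0 < C ∧ ∀ a : ℝ, ∀ᶠ p in atTop, C ≤ |H p a| / p

/-- Viscosity subsolution for a time-independent Hamiltonian `H(p,a)`. -/
def IsViscositySubsolution2 (H : ℝ → ℝ → ℝ) (a : ℝ → ℝ) (T : ℝ)
    (u : ℝ → ℝ → ℝ) : Prop :=
  ∀ φ : ℝ → ℝ → ℝ, ContDiff ℝ 1 (fun z : ℝ × ℝ => φ z.1 z.2) →
    ∀ x₀ t₀ : ℝ, t₀ ∈ Set.Icc 0 T →
      IsLocalMaxOn (fun z : ℝ × ℝ => u z.1 z.2 - φ z.1 z.2)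
        (Set.univ ×ˢ Set.Icc 0 T) (x₀, t₀) →
      ∀ aL aR : ℝ,
        Tendsto a (𝓝[<] x₀) (𝓝 aL) → Tendsto a (𝓝[>] x₀) (𝓝 aR) →
        PartialT φ x₀ t₀ +
          min (H (PartialX φ x₀ t₀) aL) (H (PartialX φ x₀ t₀) aR) ≤ 0

/-- Viscosity supersolution for a time-independent Hamiltonian `H(p,a)`. -/
def IsViscositySupersolution2 (H : ℝ → ℝ → ℝ) (a : ℝ → ℝ) (T : ℝ)
    (u : ℝ → ℝ → ℝ) : Prop :=
  ∀ φ : ℝ → ℝ → ℝ, ContDiff ℝ 1 (fun z : ℝ × ℝ => φ z.1 z.2) →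
    ∀ x₀ t₀ : ℝ, t₀ ∈ Set.Icc 0 T →
      IsLocalMinOn (fun z : ℝ × ℝ => u z.1 z.2 - φ z.1 z.2)
        (Set.univ ×ˢ Set.Icc 0 T) (x₀, t₀) →
      ∀ aL aR : ℝ,
        Tendsto a (𝓝[<] x₀) (𝓝 aL) → Tendsto a (𝓝[>] x₀) (𝓝 aR) →
        0 ≤ PartialT φ x₀ t₀ +
          max (H (PartialX φ x₀ t₀) aL) (H (PartialX φ x₀ t₀) aR)

/-- Viscosity solution for a time-independent Hamiltonian `H(p,a)`. -/
def IsViscositySolution2 (H : ℝ → ℝ → ℝ) (a : ℝ → ℝ) (T : ℝ)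
    (u : ℝ → ℝ → ℝ) (u0 : ℝ → ℝ) : Prop :=
  BUCOn T u ∧ (∀ x : ℝ, u x 0 = u0 x) ∧
    IsViscositySubsolution2 H a T u ∧ IsViscositySupersolution2 H a T u

/-- Entropy solution of the Riemann problem (3.1) for the conservation law
`p_t + H(p,a)_x = 0` with coefficient `aL` for `x ≤ 0`, `aR` for `x > 0` and
Riemann data `pl`, `pr`: a bounded self-similar weak solution satisfying the
Kružkov-type entropy inequality with the extra interface term at `x = 0`
(the specialization of (1.17) to this piecewise constant setting). -/
structure IsRiemannEntropySolution (H : ℝ → ℝ → ℝ) (aL aR pl pr : ℝ)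
    (p : ℝ → ℝ → ℝ) : Prop where
  bdd : ∃ K : ℝ, ∀ x t : ℝ, |p x t| ≤ K
  selfSimilar : ∀ c x t : ℝ, 0 < c → 0 < t → p (c * x) (c * t) = p x t
  weak : ∀ φ : ℝ → ℝ → ℝ, ContDiff ℝ 1 (fun z : ℝ × ℝ => φ z.1 z.2) →
    HasCompactSupport (fun z : ℝ × ℝ => φ z.1 z.2) →
    (∫ x : ℝ, ∫ t in Set.Ioi (0:ℝ),
        (p x t * PartialT φ x t + H (p x t) (if x ≤ 0 then aL else aR) * PartialX φ x t))
      + (∫ x : ℝ, φ x 0 * (if x < 0 then pl else pr)) = 0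
  entropy : ∀ c : ℝ, ∀ φ : ℝ → ℝ → ℝ, ContDiff ℝ 1 (fun z : ℝ × ℝ => φ z.1 z.2) →
    HasCompactSupport (fun z : ℝ × ℝ => φ z.1 z.2) → (∀ x t : ℝ, 0 ≤ φ x t) →
    0 ≤ (∫ x : ℝ, ∫ t in Set.Ioi (0:ℝ),
          (|p x t - c| * PartialT φ x t
            + Real.sign (p x t - c)
                * (H (p x t) (if x ≤ 0 then aL else aR) - H c (if x ≤ 0 then aL else aR))
                * PartialX φ x t))
        + ∫ t in Set.Ioi (0:ℝ), |H c aR - H c aL| * φ 0 t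

/-- The function `u` of formula (3.23), extended to `t = 0` by the Riemann
initial data for the Hamilton–Jacobi equation. -/
def uRiem (H : ℝ → ℝ → ℝ) (u00 aL aR pl pr : ℝ) (p : ℝ → ℝ → ℝ) :
    ℝ → ℝ → ℝ :=
  fun x t =>
    if t = 0 then u00 + (if x ≤ 0 then pl * x else pr * x)
    else u00 + x * p x t - t * (if x ≤ 0 then H (p x t) aL else H (p x t) aR)

private lemma abs_le_of_sq_le' {a b : ℝ} (h : a ^ 2 ≤ b ^ 2) (hb : 0 ≤ b) : |a| ≤ b := by
  rcases le_or_gt (|a|) b with h' | h'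
  · exact h'
  · exfalso
    have h2 : b ^ 2 < |a| ^ 2 := by nlinarith [abs_nonneg a]
    rw [sq_abs] at h2; linarith

private lemma abs_lt_of_sq_lt' {a b : ℝ} (h : a ^ 2 < b ^ 2) (hb : 0 ≤ b) : |a| < b := by
  rcases lt_or_ge (|a|) b with h' | h'
  · exact h'
  · exfalso
    have h2 : b ^ 2 ≤ |a| ^ 2 := by nlinarith [abs_nonneg a]
    rw [sq_abs] at h2; linarith

private lemma alg1 {C ε a : ℝ} (hC : 0 < C) (h : a ^ 2 ≤ C * ε ^ 2) :
    a ^ 2 ≤ ((1 + C) * ε) ^ 2 := by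
  nlinarith [sq_nonneg ε, mul_nonneg (mul_nonneg hC.le hC.le) (sq_nonneg ε),
    mul_nonneg hC.le (sq_nonneg ε)]

private lemma alg2 {C ε x y : ℝ} (hε : 0 < ε) (hε1 : ε ≤ 1) (hC : 0 < C)
    (b1 : ε * x ^ 2 ≤ C) (b2 : ε * y ^ 2 ≤ C) (b4 : (x - y) ^ 2 ≤ C * ε ^ 2) :
    (y ^ 2 - x ^ 2) ^ 2 ≤ (2 * C) ^ 2 := by
  have hsum : ε * (x + y) ^ 2 ≤ 4 * C := by
    nlinarith [mul_nonneg hε.le (sq_nonneg (x - y))]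
  have hp : (x - y) ^ 2 * (ε * (x + y) ^ 2) ≤ (C * ε ^ 2) * (4 * C) :=
    mul_le_mul b4 hsum (by positivity) (by positivity)
  have hq : ε * ((y ^ 2 - x ^ 2) ^ 2) ≤ ε * (4 * C ^ 2 * ε) := by
    nlinarith [hp, mul_nonneg (mul_nonneg (mul_nonneg (by norm_num : (0:ℝ) ≤ 4)
      (sq_nonneg C)) hε.le) (by linarith : (0:ℝ) ≤ 1 - ε)]
  have h2 : (y ^ 2 - x ^ 2) ^ 2 ≤ 4 * C ^ 2 * ε := (mul_le_mul_iff_right₀ hε).mp hq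
  nlinarith [mul_nonneg (sq_nonneg C) (by linarith : (0:ℝ) ≤ 1 - ε)]

set_option maxHeartbeats 1000000 in
private lemma phiPen_pos (u v : ℝ → ℝ → ℝ) (lam K ε : ℝ) {a b : ℝ}
    (ha : 0 < a) (hb : 0 < b) (t s : ℝ) :
    PhiPen u v lam K ε a t b s =
      u a t - v b s - lam * (t + s) - ε * a ^ 2 - ε * b ^ 2
        - (t - s) ^ 2 / ε ^ 2 - (a - b) ^ 2 / ε ^ 2
        - 1 / ε * (1 / a ^ 2) - 1 / ε * (1 / b ^ 2)
        - ε ^ 3 / ((a - b) ^ 2 + ε ^ 2) := by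
  unfold PhiPen chiInd
  rw [if_neg (by push_neg; exact ⟨ha, hb⟩), abs_of_pos ha, abs_of_pos hb]
  ring

set_option maxHeartbeats 2000000 in
private lemma key_bounds (S : ℝ) (hS : 0 < S) (u v : ℝ → ℝ → ℝ)
    (Mu Mv lam : ℝ) (hlam : 0 < lam)
    (hMub : ∀ x t : ℝ, t ∈ Set.Icc 0 S → |u x t| ≤ Mu)
    (hMvb : ∀ x t : ℝ, t ∈ Set.Icc 0 S → |v x t| ≤ Mv)
    (ε x t y s : ℝ) (hε : 0 < ε) (hε1 : ε ≤ 1)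
    (hx : 0 < x) (hy : 0 < y) (ht : t ∈ Set.Icc 0 S) (hs : s ∈ Set.Icc 0 S)
    (hm : ∀ x' t' y' s' : ℝ, x' ≠ 0 → y' ≠ 0 → t' ∈ Set.Icc 0 S → s' ∈ Set.Icc 0 S →
        PhiPen u v lam (2 * (Mu + Mv)) ε x' t' y' s' ≤
          PhiPen u v lam (2 * (Mu + Mv)) ε x t y s) :
    (t - s) ^ 2 ≤ ((1 + (2 * (Mu + Mv) + 5)) * ε) ^ 2 ∧
    (x - y) ^ 2 ≤ ((1 + (2 * (Mu + Mv) + 5)) * ε) ^ 2 ∧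
    (t - s) ^ 2 / ε ^ 2 ≤ |v y t - v y s| + lam * ((1 + (2 * (Mu + Mv) + 5)) * ε) ∧
    (x - y) ^ 2 / ε ^ 2 ≤ |u x t - u y t| +
      (2 * (2 * (Mu + Mv) + 5) + 2 * (2 * (Mu + Mv) + 5) ^ 3 + 1) * ε ∧
    |1 / ε * (1 / x ^ 2 - 1 / y ^ 2)| ≤ 2 * (2 * (Mu + Mv) + 5) ^ 3 * ε := by
  have hMu0 : 0 ≤ Mu := le_trans (abs_nonneg _) (hMub 0 0 ⟨le_rfl, hS.le⟩)
  have hMv0 : 0 ≤ Mv := le_trans (abs_nonneg _) (hMvb 0 0 ⟨le_rfl, hS.le⟩)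
  obtain ⟨C, hCdef⟩ : ∃ C : ℝ, C = 2 * (Mu + Mv) + 5 := ⟨_, rfl⟩
  rw [← hCdef]
  have hC0 : (0:ℝ) < C := by rw [hCdef]; linarith
  have hεn : ε ≠ 0 := hε.ne'
  have hΦ := phiPen_pos u v lam (2 * (Mu + Mv)) ε hx hy t s
  -- the far diagonal point giving the lower bound on the max value
  obtain ⟨z, hzdef⟩ : ∃ z : ℝ, z = Real.sqrt (1 / ε) := ⟨_, rfl⟩
  have hz0 : (0:ℝ) < z := hzdef ▸ Real.sqrt_pos.mpr (by positivity)
  have hz2 : z ^ 2 = 1 / ε := by rw [hzdef]; exact Real.sq_sqrt (by positivity)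
  have hval : PhiPen u v lam (2 * (Mu + Mv)) ε z 0 z 0 = u z 0 - v z 0 - 4 - ε := by
    rw [phiPen_pos u v lam (2 * (Mu + Mv)) ε hz0 hz0, hz2]
    simp only [sub_self]
    field_simp
    ring
  have h0 := hm z 0 z 0 hz0.ne' hz0.ne' ⟨le_rfl, hS.le⟩ ⟨le_rfl, hS.le⟩
  rw [hval, hΦ] at h0
  have huz : -Mu ≤ u z 0 := (abs_le.mp (hMub z 0 ⟨le_rfl, hS.le⟩)).1
  have hvz : v z 0 ≤ Mv := (abs_le.mp (hMvb z 0 ⟨le_rfl, hS.le⟩)).2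
  have hux : u x t ≤ Mu := (abs_le.mp (hMub x t ht)).2
  have hvy : -Mv ≤ v y s := (abs_le.mp (hMvb y s hs)).1
  have hls : 0 ≤ lam * (t + s) := mul_nonneg hlam.le (by linarith [ht.1, hs.1])
  have n1 : 0 ≤ ε * x ^ 2 := by positivity
  have n2 : 0 ≤ ε * y ^ 2 := by positivity
  have n3 : 0 ≤ (t - s) ^ 2 / ε ^ 2 := by positivity
  have n4 : 0 ≤ (x - y) ^ 2 / ε ^ 2 := by positivity
  have n5 : 0 ≤ 1 / ε * (1 / x ^ 2) := by positivity
  have n6 : 0 ≤ 1 / ε * (1 / y ^ 2) := by positivity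
  have n7 : 0 ≤ ε ^ 3 / ((x - y) ^ 2 + ε ^ 2) := by positivity
  have b1 : ε * x ^ 2 ≤ C := by linarith
  have b2 : ε * y ^ 2 ≤ C := by linarith
  have b3' : (t - s) ^ 2 / ε ^ 2 ≤ C := by linarith
  have b4' : (x - y) ^ 2 / ε ^ 2 ≤ C := by linarith
  have b5' : 1 / ε * (1 / x ^ 2) ≤ C := by linarith
  have b6' : 1 / ε * (1 / y ^ 2) ≤ C := by linarith
  -- time comparison
  have h7 := hm x t y t hx.ne' hy.ne' ht ht
  rw [phiPen_pos u v lam (2 * (Mu + Mv)) ε hx hy t t, hΦ] at h7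
  have hz7 : (t - t) ^ 2 / ε ^ 2 = 0 := by simp
  rw [hz7] at h7
  have k3a : (t - s) ^ 2 / ε ^ 2 ≤ (v y t - v y s) + lam * (t - s) := by linarith
  -- space comparison
  have h8 := hm y t y s hy.ne' hy.ne' ht hs
  rw [phiPen_pos u v lam (2 * (Mu + Mv)) ε hy hy t s, hΦ] at h8
  have hz8 : (y - y) ^ 2 / ε ^ 2 = 0 := by simp
  have hz8' : ε ^ 3 / ((y - y) ^ 2 + ε ^ 2) = ε := by
    rw [sub_self]
    field_simp
    ring
  rw [hz8, hz8'] at h8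
  have k4a : (x - y) ^ 2 / ε ^ 2 ≤ (u x t - u y t) + (ε * y ^ 2 - ε * x ^ 2) +
      (1 / ε * (1 / y ^ 2) - 1 / ε * (1 / x ^ 2)) + ε := by linarith
  clear h0 h7 h8 hm hΦ hval huz hvz hux hvy hls
  -- derived clean bounds
  have b3 : (t - s) ^ 2 ≤ C * ε ^ 2 := by
    have h := mul_le_mul_of_nonneg_right b3' (sq_nonneg ε)
    calc (t - s) ^ 2 = (t - s) ^ 2 / ε ^ 2 * ε ^ 2 := by field_simp
      _ ≤ C * ε ^ 2 := h
  have b4 : (x - y) ^ 2 ≤ C * ε ^ 2 := by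
    have h := mul_le_mul_of_nonneg_right b4' (sq_nonneg ε)
    calc (x - y) ^ 2 = (x - y) ^ 2 / ε ^ 2 * ε ^ 2 := by field_simp
      _ ≤ C * ε ^ 2 := h
  have b5 : 1 / x ^ 2 ≤ C * ε := by
    have h := mul_le_mul_of_nonneg_left b5' hε.le
    calc 1 / x ^ 2 = ε * (1 / ε * (1 / x ^ 2)) := by field_simp
      _ ≤ ε * C := h
      _ = C * ε := mul_comm _ _
  have b6 : 1 / y ^ 2 ≤ C * ε := by
    have h := mul_le_mul_of_nonneg_left b6' hε.le
    calc 1 / y ^ 2 = ε * (1 / ε * (1 / y ^ 2)) := by field_simp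
      _ ≤ ε * C := h
      _ = C * ε := mul_comm _ _
  have K1 : (t - s) ^ 2 ≤ ((1 + C) * ε) ^ 2 := alg1 hC0 b3
  have K2 : (x - y) ^ 2 ≤ ((1 + C) * ε) ^ 2 := alg1 hC0 b4
  have habs_ts : |t - s| ≤ (1 + C) * ε := abs_le_of_sq_le' K1 (by positivity)
  have K3 : (t - s) ^ 2 / ε ^ 2 ≤ |v y t - v y s| + lam * ((1 + C) * ε) := by
    have h1 : lam * (t - s) ≤ lam * ((1 + C) * ε) :=
      mul_le_mul_of_nonneg_left (le_trans (le_abs_self _) habs_ts) hlam.le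
    linarith [le_abs_self (v y t - v y s)]
  have habsdiff : |y ^ 2 - x ^ 2| ≤ 2 * C :=
    abs_le_of_sq_le' (alg2 hε hε1 hC0 b1 b2 b4) (by linarith)
  have m1 : ε * y ^ 2 - ε * x ^ 2 ≤ 2 * C * ε := by
    have h := mul_le_mul_of_nonneg_left (le_of_abs_le habsdiff) hε.le
    linarith
  have hc1 : 1 / x ^ 2 - 1 / y ^ 2 = (y ^ 2 - x ^ 2) * (1 / x ^ 2) * (1 / y ^ 2) := by
    field_simp
  have habs1 : |1 / ε * (1 / x ^ 2 - 1 / y ^ 2)| =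
      1 / ε * (|y ^ 2 - x ^ 2| * (1 / x ^ 2) * (1 / y ^ 2)) := by
    rw [hc1, abs_mul, abs_mul, abs_mul,
      abs_of_pos (show (0:ℝ) < 1 / ε by positivity),
      abs_of_pos (show (0:ℝ) < 1 / x ^ 2 by positivity),
      abs_of_pos (show (0:ℝ) < 1 / y ^ 2 by positivity)]
  have K5 : |1 / ε * (1 / x ^ 2 - 1 / y ^ 2)| ≤ 2 * C ^ 3 * ε := by
    rw [habs1]
    have t1 : |y ^ 2 - x ^ 2| * (1 / x ^ 2) ≤ (2 * C) * (C * ε) :=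
      mul_le_mul habsdiff b5 (by positivity) (by linarith)
    have t2 : |y ^ 2 - x ^ 2| * (1 / x ^ 2) * (1 / y ^ 2) ≤ (2 * C) * (C * ε) * (C * ε) :=
      mul_le_mul t1 b6 (by positivity)
        (mul_nonneg (by linarith) (mul_nonneg hC0.le hε.le))
    calc 1 / ε * (|y ^ 2 - x ^ 2| * (1 / x ^ 2) * (1 / y ^ 2))
        ≤ 1 / ε * ((2 * C) * (C * ε) * (C * ε)) :=
          mul_le_mul_of_nonneg_left t2 (by positivity)
      _ = 2 * C ^ 3 * ε := by field_simp
  have m2 : 1 / ε * (1 / y ^ 2) - 1 / ε * (1 / x ^ 2) ≤ 2 * C ^ 3 * ε := by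
    have hn := neg_le_abs (1 / ε * (1 / x ^ 2 - 1 / y ^ 2))
    have he : 1 / ε * (1 / y ^ 2) - 1 / ε * (1 / x ^ 2) =
        -(1 / ε * (1 / x ^ 2 - 1 / y ^ 2)) := by ring
    linarith
  have K4 : (x - y) ^ 2 / ε ^ 2 ≤ |u x t - u y t| + (2 * C + 2 * C ^ 3 + 1) * ε := by
    have := le_abs_self (u x t - u y t)
    linarith
  exact ⟨K1, K2, K3, K4, K5⟩


/-- **Vanishing rates at the maximizer of the penalization function (2.8)–(2.9).**
With `u`, `v`, `λ`, `K = 2(Mu + Mv)` and `Φ_ε` as in Lemma 2.3, if for every `ε > 0`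
the point `(x_ε, t_ε, y_ε, s_ε)` (with `x_ε, y_ε > 0` and `t_ε, s_ε ∈ [0,S]`) is a
global maximum of `Φ_ε` over its domain, then, as `ε → 0⁺`,
`(1/ε)(1/x_ε² − 1/y_ε²) → 0`, `(t_ε − s_ε)/ε → 0`, `(x_ε − y_ε)/ε → 0` and
`ε³/((x_ε − y_ε)² + ε²) → 0`. -/
theorem penalization_maximizer_vanishing_rates
    (S : ℝ) (hS : 0 < S) (u v : ℝ → ℝ → ℝ)
    (hu : BUCOn S u) (hv : BUCOn S v)
    (Mu Mv : ℝ)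
    (hMu : IsLUB ((fun z : ℝ × ℝ => |u z.1 z.2|) '' (Set.univ ×ˢ Set.Icc 0 S)) Mu)
    (hMv : IsLUB ((fun z : ℝ × ℝ => |v z.1 z.2|) '' (Set.univ ×ˢ Set.Icc 0 S)) Mv)
    (lam : ℝ) (hlam : 0 < lam)
    (hsup : 0 ≤ sSup {r : ℝ | ∃ x t : ℝ, t ∈ Set.Icc 0 S ∧
      r = u x t - v x t - 2 * lam * t})
    (xe te ye se : ℝ → ℝ)
    (hmax : ∀ ε : ℝ, 0 < ε →
      0 < xe ε ∧ 0 < ye ε ∧ te ε ∈ Set.Icc 0 S ∧ se ε ∈ Set.Icc 0 S ∧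
      ∀ x t y s : ℝ, x ≠ 0 → y ≠ 0 → t ∈ Set.Icc 0 S → s ∈ Set.Icc 0 S →
        PhiPen u v lam (2 * (Mu + Mv)) ε x t y s ≤
          PhiPen u v lam (2 * (Mu + Mv)) ε (xe ε) (te ε) (ye ε) (se ε)) :
    Filter.Tendsto (fun ε : ℝ => (1 / ε) * (1 / (xe ε) ^ 2 - 1 / (ye ε) ^ 2))
        (𝓝[>] 0) (𝓝 0) ∧
    Filter.Tendsto (fun ε : ℝ => (te ε - se ε) / ε) (𝓝[>] 0) (𝓝 0) ∧
    Filter.Tendsto (fun ε : ℝ => (xe ε - ye ε) / ε) (𝓝[>] 0) (𝓝 0) ∧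
    Filter.Tendsto (fun ε : ℝ => ε ^ 3 / ((xe ε - ye ε) ^ 2 + ε ^ 2))
        (𝓝[>] 0) (𝓝 0) := by
  have h0S : (0:ℝ) ∈ Set.Icc (0:ℝ) S := ⟨le_rfl, hS.le⟩
  have hMub : ∀ x t : ℝ, t ∈ Set.Icc 0 S → |u x t| ≤ Mu := fun x t ht =>
    hMu.1 ⟨(x, t), Set.mem_prod.mpr ⟨Set.mem_univ _, ht⟩, rfl⟩
  have hMvb : ∀ x t : ℝ, t ∈ Set.Icc 0 S → |v x t| ≤ Mv := fun x t ht =>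
    hMv.1 ⟨(x, t), Set.mem_prod.mpr ⟨Set.mem_univ _, ht⟩, rfl⟩
  obtain ⟨C, hCdef⟩ : ∃ C : ℝ, C = 2 * (Mu + Mv) + 5 := ⟨_, rfl⟩
  have hMu0 : 0 ≤ Mu := le_trans (abs_nonneg _) (hMub 0 0 h0S)
  have hMv0 : 0 ≤ Mv := le_trans (abs_nonneg _) (hMvb 0 0 h0S)
  have hC0 : (0:ℝ) < C := by rw [hCdef]; linarith
  have hkey : ∀ ε : ℝ, ε ∈ Set.Ioo (0:ℝ) 1 →
      (te ε - se ε) ^ 2 ≤ ((1 + C) * ε) ^ 2 ∧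
      (xe ε - ye ε) ^ 2 ≤ ((1 + C) * ε) ^ 2 ∧
      (te ε - se ε) ^ 2 / ε ^ 2 ≤
        |v (ye ε) (te ε) - v (ye ε) (se ε)| + lam * ((1 + C) * ε) ∧
      (xe ε - ye ε) ^ 2 / ε ^ 2 ≤
        |u (xe ε) (te ε) - u (ye ε) (te ε)| + (2 * C + 2 * C ^ 3 + 1) * ε ∧
      |1 / ε * (1 / (xe ε) ^ 2 - 1 / (ye ε) ^ 2)| ≤ 2 * C ^ 3 * ε := by
    intro ε hε
    obtain ⟨hx, hy, ht, hs, hm⟩ := hmax ε hε.1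
    rw [hCdef]
    exact key_bounds S hS u v Mu Mv lam hlam hMub hMvb ε _ _ _ _ hε.1 hε.2.le hx hy ht hs hm
  have hIoo : ∀ᶠ ε in 𝓝[>] (0:ℝ), ε ∈ Set.Ioo (0:ℝ) 1 :=
    Ioo_mem_nhdsGT_of_mem ⟨le_rfl, one_pos⟩
  have hpos : ∀ᶠ ε in 𝓝[>] (0:ℝ), (0:ℝ) < ε := self_mem_nhdsWithin
  have hid : Tendsto (fun ε : ℝ => ε) (𝓝[>] (0:ℝ)) (𝓝 0) :=
    tendsto_id.mono_left nhdsWithin_le_nhds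
  have hlin : ∀ a : ℝ, Tendsto (fun ε : ℝ => a * ε) (𝓝[>] (0:ℝ)) (𝓝 0) := by
    intro a
    simpa using hid.const_mul a
  -- the two uniform-continuity limits
  have hvd : Tendsto (fun ε => |v (ye ε) (te ε) - v (ye ε) (se ε)|)
      (𝓝[>] (0:ℝ)) (𝓝 0) := by
    rw [Metric.tendsto_nhdsWithin_nhds]
    intro η hη
    obtain ⟨δ, hδ, H⟩ := Metric.uniformContinuousOn_iff.mp hv.2 η hη
    refine ⟨min 1 (δ / (1 + C)), by positivity, ?_⟩
    intro ε hε hd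
    have hε0 : (0:ℝ) < ε := hε
    rw [Real.dist_eq, sub_zero, abs_of_pos hε0] at hd
    have hε1 : ε < 1 := lt_of_lt_of_le hd (min_le_left _ _)
    have hεδ : ε < δ / (1 + C) := lt_of_lt_of_le hd (min_le_right _ _)
    obtain ⟨hK1, -, -, -, -⟩ := hkey ε ⟨hε0, hε1⟩
    obtain ⟨-, -, ht, hs, -⟩ := hmax ε hε0
    have hts : |te ε - se ε| < δ := by
      have h1 : |te ε - se ε| ≤ (1 + C) * ε := abs_le_of_sq_le' hK1 (by positivity)
      have h2 : (1 + C) * ε < δ := by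
        rw [lt_div_iff₀ (by positivity : (0:ℝ) < 1 + C)] at hεδ
        linarith
      linarith
    have hdist : dist ((ye ε, te ε) : ℝ × ℝ) (ye ε, se ε) = |te ε - se ε| := by
      rw [Prod.dist_eq, Real.dist_eq, Real.dist_eq, sub_self, abs_zero]
      exact max_eq_right (abs_nonneg _)
    have := H (ye ε, te ε) (Set.mem_prod.mpr ⟨Set.mem_univ _, ht⟩)
      (ye ε, se ε) (Set.mem_prod.mpr ⟨Set.mem_univ _, hs⟩) (by rw [hdist]; exact hts)
    rw [Real.dist_eq] at this
    rw [Real.dist_eq, sub_zero, abs_abs]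
    exact this
  have hud : Tendsto (fun ε => |u (xe ε) (te ε) - u (ye ε) (te ε)|)
      (𝓝[>] (0:ℝ)) (𝓝 0) := by
    rw [Metric.tendsto_nhdsWithin_nhds]
    intro η hη
    obtain ⟨δ, hδ, H⟩ := Metric.uniformContinuousOn_iff.mp hu.2 η hη
    refine ⟨min 1 (δ / (1 + C)), by positivity, ?_⟩
    intro ε hε hd
    have hε0 : (0:ℝ) < ε := hε
    rw [Real.dist_eq, sub_zero, abs_of_pos hε0] at hd
    have hε1 : ε < 1 := lt_of_lt_of_le hd (min_le_left _ _)
    have hεδ : ε < δ / (1 + C) := lt_of_lt_of_le hd (min_le_right _ _)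
    obtain ⟨-, hK2, -, -, -⟩ := hkey ε ⟨hε0, hε1⟩
    obtain ⟨-, -, ht, -, -⟩ := hmax ε hε0
    have hts : |xe ε - ye ε| < δ := by
      have h1 : |xe ε - ye ε| ≤ (1 + C) * ε := abs_le_of_sq_le' hK2 (by positivity)
      have h2 : (1 + C) * ε < δ := by
        rw [lt_div_iff₀ (by positivity : (0:ℝ) < 1 + C)] at hεδ
        linarith
      linarith
    have hdist : dist ((xe ε, te ε) : ℝ × ℝ) (ye ε, te ε) = |xe ε - ye ε| := by
      rw [Prod.dist_eq, Real.dist_eq, Real.dist_eq, sub_self, abs_zero]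
      exact max_eq_left (abs_nonneg _)
    have := H (xe ε, te ε) (Set.mem_prod.mpr ⟨Set.mem_univ _, ht⟩)
      (ye ε, te ε) (Set.mem_prod.mpr ⟨Set.mem_univ _, ht⟩) (by rw [hdist]; exact hts)
    rw [Real.dist_eq] at this
    rw [Real.dist_eq, sub_zero, abs_abs]
    exact this
  refine ⟨?_, ?_, ?_, ?_⟩
  · -- (1/ε)(1/x² − 1/y²) → 0
    refine squeeze_zero_norm' ?_ (hlin (2 * C ^ 3))
    filter_upwards [hIoo] with ε hε
    simpa only [Real.norm_eq_abs] using (hkey ε hε).2.2.2.2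
  · -- (t−s)/ε → 0
    have hsq2 : Tendsto (fun ε => ((te ε - se ε) / ε) ^ 2) (𝓝[>] (0:ℝ)) (𝓝 0) := by
      have hg : Tendsto (fun ε => |v (ye ε) (te ε) - v (ye ε) (se ε)| +
          lam * (1 + C) * ε) (𝓝[>] (0:ℝ)) (𝓝 0) := by
        have := hvd.add (hlin (lam * (1 + C)))
        simpa using this
      apply squeeze_zero' (Filter.Eventually.of_forall fun ε => sq_nonneg _) _ hg
      filter_upwards [hIoo] with ε hε
      have h3 := (hkey ε hε).2.2.1
      calc ((te ε - se ε) / ε) ^ 2 = (te ε - se ε) ^ 2 / ε ^ 2 := by rw [div_pow]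
        _ ≤ |v (ye ε) (te ε) - v (ye ε) (se ε)| + lam * ((1 + C) * ε) := h3
        _ = |v (ye ε) (te ε) - v (ye ε) (se ε)| + lam * (1 + C) * ε := by ring
    rw [tendsto_zero_iff_abs_tendsto_zero]
    have h := (Real.continuous_sqrt.tendsto 0).comp hsq2
    simpa [Function.comp_def, Real.sqrt_sq_eq_abs] using h
  · -- (x−y)/ε → 0
    have hsq2 : Tendsto (fun ε => ((xe ε - ye ε) / ε) ^ 2) (𝓝[>] (0:ℝ)) (𝓝 0) := by
      have hg : Tendsto (fun ε => |u (xe ε) (te ε) - u (ye ε) (te ε)| +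
          (2 * C + 2 * C ^ 3 + 1) * ε) (𝓝[>] (0:ℝ)) (𝓝 0) := by
        have := hud.add (hlin (2 * C + 2 * C ^ 3 + 1))
        simpa using this
      apply squeeze_zero' (Filter.Eventually.of_forall fun ε => sq_nonneg _) _ hg
      filter_upwards [hIoo] with ε hε
      have h4 := (hkey ε hε).2.2.2.1
      calc ((xe ε - ye ε) / ε) ^ 2 = (xe ε - ye ε) ^ 2 / ε ^ 2 := by rw [div_pow]
        _ ≤ |u (xe ε) (te ε) - u (ye ε) (te ε)| + (2 * C + 2 * C ^ 3 + 1) * ε := h4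
    rw [tendsto_zero_iff_abs_tendsto_zero]
    have h := (Real.continuous_sqrt.tendsto 0).comp hsq2
    simpa [Function.comp_def, Real.sqrt_sq_eq_abs] using h
  · -- ε³/((x−y)²+ε²) → 0
    apply squeeze_zero' ?_ ?_ hid
    · filter_upwards [hpos] with ε hε
      have hε0 : (0:ℝ) < ε := hε
      positivity
    · filter_upwards [hpos] with ε hε
      have hε0 : (0:ℝ) < ε := hε
      rw [div_le_iff₀ (by positivity)]
      nlinarith [mul_nonneg hε0.le (sq_nonneg (xe ε - ye ε))]


end
end

section
/- Interaction estimate for a p-wave crossing a g-wave (claim (3.17)): Let H = H(p,a,g) be three times continuously differentiable with H(0,a,g) > 0, and let Ψ(p,a,g) = sign(p)(H(p,a,g) − H(0,a,g))/H(0,a,g). Fix bounds a̲ ≤ a ≤ ā, g̲ ≤ g ≤ ḡ, |p| ≤ C̄, and suppose there are constants P > 0 and 0 < c₀ ≤ C₀ such that for all a ∈ [a̲, ā] and g ∈ [g̲, ḡ]: 0 < c₀ ≤ H_{pp}(p,a,g) ≤ C₀ whenever |p| ≤ P, and 0 < c₀ ≤ |H_p(p,a,g)| ≤ C₀ whenever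 P ≤ |p| ≤ C̄; suppose also that p ↦ H(p,a,g) is even with H_p(0,a,g) = 0, and that the mixed derivatives Ψ_{pg} and Ψ_{ppg} are bounded on the region |p| ≤ C̄, a ∈ [a̲,ā], g ∈ [g̲,ḡ]. Then there exists a constant C, depending only on these bounds, such that for all p_l, p_r with |p_l|, |p_r| ≤ C̄, all a ∈ [a̲,ā], and all g⁻, g⁺ ∈ [g̲,ḡ]: |Ψ(p_r,a,g⁺) − Ψ(p_l,a,g⁺)| − |Ψ(p_r,a,g⁻) − Ψ(p_l,a,g⁻)| ≤ C |g⁺ − g⁻| · |Ψ(p_r,a,g⁻) − Ψ(p_l,a,g⁻)|. -/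
open Filter Topology MeasureTheory

noncomputable section

private lemma hasDerivAt_curve1 {F : ℝ×ℝ×ℝ → ℝ} (hF : Differentiable ℝ F) (a g p : ℝ) :
    HasDerivAt (fun q => F (q, a, g)) (fderiv ℝ F (p, a, g) (1, 0, 0)) p := by
  have h2 : HasDerivAt (fun q : ℝ => (q, a, g)) ((1:ℝ), (0:ℝ), (0:ℝ)) p := by
    simpa using ((hasDerivAt_id p).prodMk ((hasDerivAt_const p a).prodMk (hasDerivAt_const p g)))
  exact (hF (p,a,g)).hasFDerivAt.comp_hasDerivAt p h2

private lemma hasDerivAt_curve3 {F : ℝ×ℝ×ℝ → ℝ} (hF : Differentiable ℝ F) (p a g : ℝ) :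
    HasDerivAt (fun h => F (p, a, h)) (fderiv ℝ F (p, a, g) (0, 0, 1)) g := by
  have h2 : HasDerivAt (fun h : ℝ => (p, a, h)) ((0:ℝ), (0:ℝ), (1:ℝ)) g := by
    simpa using ((hasDerivAt_const g p).prodMk ((hasDerivAt_const g a).prodMk (hasDerivAt_id g)))
  exact (hF (p,a,g)).hasFDerivAt.comp_hasDerivAt g h2

set_option maxHeartbeats 1000000 in
/-- **Interaction estimate (3.17): a `p`-wave crossing a `g`-wave.**  Let `H(p,a,g)`
be `C³` with `H(0,a,g) > 0`, let `Ψ` be the Temple singular mapping, and assume on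
the region `|p| ≤ C̄`, `a ∈ [a̲,ā]`, `g ∈ [g̲,ḡ]`: uniform convexity bounds
`0 < c₀ ≤ H_{pp} ≤ C₀` for `|p| ≤ P` and `0 < c₀ ≤ |H_p| ≤ C₀` for `P ≤ |p| ≤ C̄`;
`p ↦ H(p,a,g)` even with `H_p(0,a,g) = 0`; and bounded mixed derivatives `Ψ_{pg}`,
`Ψ_{ppg}`.  Then there is a constant `C`, depending only on those bounds, with
`|Ψ(p_r,a,g⁺) − Ψ(p_l,a,g⁺)| − |Ψ(p_r,a,g⁻) − Ψ(p_l,a,g⁻)|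
  ≤ C |g⁺ − g⁻| |Ψ(p_r,a,g⁻) − Ψ(p_l,a,g⁻)|`. -/
theorem interaction_estimate_p_wave_g_wave
    (H : ℝ → ℝ → ℝ → ℝ)
    (hsmooth : ContDiff ℝ 3 (fun z : ℝ × ℝ × ℝ => H z.1 z.2.1 z.2.2))
    (aLo aHi gLo gHi Cbar P c₀ C₀ B : ℝ)
    (haa : aLo ≤ aHi) (hgg : gLo ≤ gHi)
    (hP : 0 < P) (hPC : P ≤ Cbar) (hc₀ : 0 < c₀) (hcC : c₀ ≤ C₀)
    (hHpos : ∀ a g : ℝ, a ∈ Set.Icc aLo aHi → g ∈ Set.Icc gLo gHi → 0 < H 0 a g)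
    (hconv : ∀ p a g : ℝ, |p| ≤ P → a ∈ Set.Icc aLo aHi → g ∈ Set.Icc gLo gHi →
      c₀ ≤ iteratedDeriv 2 (fun q => H q a g) p ∧
        iteratedDeriv 2 (fun q => H q a g) p ≤ C₀)
    (hmono : ∀ p a g : ℝ, P ≤ |p| → |p| ≤ Cbar →
      a ∈ Set.Icc aLo aHi → g ∈ Set.Icc gLo gHi →
      c₀ ≤ |deriv (fun q => H q a g) p| ∧ |deriv (fun q => H q a g) p| ≤ C₀)
    (heven : ∀ p a g : ℝ, H (-p) a g = H p a g)
    (hd0 : ∀ a g : ℝ, deriv (fun q => H q a g) 0 = 0)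
    (hmixed : ∀ p a g : ℝ, |p| ≤ Cbar →
      a ∈ Set.Icc aLo aHi → g ∈ Set.Icc gLo gHi →
      |deriv (fun h => deriv (fun q => TempleMap H q a h) p) g| ≤ B ∧
      |deriv (fun h => iteratedDeriv 2 (fun q => TempleMap H q a h) p) g| ≤ B) :
    ∃ C : ℝ, ∀ pl pr a gm gp : ℝ, |pl| ≤ Cbar → |pr| ≤ Cbar →
      a ∈ Set.Icc aLo aHi → gm ∈ Set.Icc gLo gHi → gp ∈ Set.Icc gLo gHi →
      |TempleMap H pr a gp - TempleMap H pl a gp|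
          - |TempleMap H pr a gm - TempleMap H pl a gm|
        ≤ C * |gp - gm| * |TempleMap H pr a gm - TempleMap H pl a gm| := by
  classical
  set Hu : ℝ × ℝ × ℝ → ℝ := fun z => H z.1 z.2.1 z.2.2 with hHu
  have hHu3 : ContDiff ℝ 3 Hu := hsmooth
  -- compact box extrema of H(0,·,·)
  have hScomp : IsCompact (Set.Icc aLo aHi ×ˢ Set.Icc gLo gHi) :=
    isCompact_Icc.prod isCompact_Icc
  have hSne : (Set.Icc aLo aHi ×ˢ Set.Icc gLo gHi).Nonempty :=
    ⟨(aLo, gLo), ⟨⟨le_rfl, haa⟩, ⟨le_rfl, hgg⟩⟩⟩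
  have hH0cont : Continuous (fun z : ℝ × ℝ => H 0 z.1 z.2) := by
    have : Continuous (fun z : ℝ × ℝ => ((0:ℝ), z.1, z.2)) := by continuity
    exact hHu3.continuous.comp this
  obtain ⟨zmax, hzmaxS, hzmax⟩ :=
    hScomp.exists_isMaxOn hSne hH0cont.continuousOn
  obtain ⟨zmin, hzminS, hzmin⟩ :=
    hScomp.exists_isMinOn hSne hH0cont.continuousOn
  set h0max : ℝ := H 0 zmax.1 zmax.2 with hh0max
  set h0min : ℝ := H 0 zmin.1 zmin.2 with hh0min
  have h0minpos : 0 < h0min := hHpos _ _ hzminS.1 hzminS.2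
  have h0maxpos : 0 < h0max := hHpos _ _ hzmaxS.1 hzmaxS.2
  have hH0le : ∀ a g : ℝ, a ∈ Set.Icc aLo aHi → g ∈ Set.Icc gLo gHi →
      h0min ≤ H 0 a g ∧ H 0 a g ≤ h0max := by
    intro a g ha hg
    exact ⟨hzmin (show (a,g) ∈ _ from ⟨ha, hg⟩), hzmax (show (a,g) ∈ _ from ⟨ha, hg⟩)⟩
  have hCbar : 0 < Cbar := lt_of_lt_of_le hP hPC
  have hB : 0 ≤ B := by
    have := (hmixed 0 aLo gLo (by simp [hCbar.le]) ⟨le_rfl, haa⟩ ⟨le_rfl, hgg⟩).1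
    exact le_trans (abs_nonneg _) this
  have hC₀ : 0 < C₀ := lt_of_lt_of_le hc₀ hcC
  set c₂ : ℝ := min c₀ (c₀ / P) with hc₂def
  have hc₂ : 0 < c₂ := lt_min hc₀ (div_pos hc₀ hP)
  set K : ℝ := B * max 1 (Cbar / P) * h0max / c₂ with hKdef
  refine ⟨K, ?_⟩
  suffices key : ∀ pl pr a gm gp : ℝ, |pl| ≤ Cbar → |pr| ≤ Cbar →
      a ∈ Set.Icc aLo aHi → gm ∈ Set.Icc gLo gHi → gp ∈ Set.Icc gLo gHi → pl ≤ pr →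
      |TempleMap H pr a gp - TempleMap H pl a gp|
          - |TempleMap H pr a gm - TempleMap H pl a gm|
        ≤ K * |gp - gm| * |TempleMap H pr a gm - TempleMap H pl a gm| by
    intro pl pr a gm gp h1 h2 h3 h4 h5
    rcases le_total pl pr with h | h
    · exact key pl pr a gm gp h1 h2 h3 h4 h5 h
    · rw [abs_sub_comm (TempleMap H pr a gp), abs_sub_comm (TempleMap H pr a gm)]
      exact key pr pl a gm gp h2 h1 h3 h4 h5 h
  intro pl pr a gm gp hpl hpr ha hgm hgp hle
  -- derivative infrastructure
  have hGc : ContDiff ℝ 2 (fun z : ℝ×ℝ×ℝ => fderiv ℝ Hu z ((1:ℝ),(0:ℝ),(0:ℝ))) :=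
    (hHu3.fderiv_right (by norm_num)).clm_apply contDiff_const
  set G : ℝ×ℝ×ℝ → ℝ := fun z => fderiv ℝ Hu z ((1:ℝ),(0:ℝ),(0:ℝ)) with hGdef
  have hG2c : ContDiff ℝ 1 (fun z : ℝ×ℝ×ℝ => fderiv ℝ G z ((1:ℝ),(0:ℝ),(0:ℝ))) :=
    (hGc.fderiv_right (by norm_num)).clm_apply contDiff_const
  set G2 : ℝ×ℝ×ℝ → ℝ := fun z => fderiv ℝ G z ((1:ℝ),(0:ℝ),(0:ℝ)) with hG2def
  have hG3c : Continuous (fun z : ℝ×ℝ×ℝ => fderiv ℝ G2 z ((0:ℝ),(0:ℝ),(1:ℝ))) :=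
    (((hG2c.fderiv_right (m := 0) (by norm_num)).clm_apply contDiff_const)).continuous
  set G3 : ℝ×ℝ×ℝ → ℝ := fun z => fderiv ℝ G2 z ((0:ℝ),(0:ℝ),(1:ℝ)) with hG3def
  have hH0dc : Continuous (fun z : ℝ×ℝ×ℝ => fderiv ℝ Hu z ((0:ℝ),(0:ℝ),(1:ℝ))) :=
    (((hHu3.fderiv_right (m := 0) (by norm_num)).clm_apply contDiff_const)).continuous
  set H0d : ℝ×ℝ×ℝ → ℝ := fun z => fderiv ℝ Hu z ((0:ℝ),(0:ℝ),(1:ℝ)) with hH0ddef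
  set Hp : ℝ → ℝ → ℝ := fun p g => G (p, a, g) with hHpdef
  set Hpp : ℝ → ℝ → ℝ := fun p g => G2 (p, a, g) with hHppdef
  set H0 : ℝ → ℝ := fun g => H 0 a g with hH0def
  have hHpD : ∀ p g : ℝ, HasDerivAt (fun q => H q a g) (Hp p g) p := fun p g =>
    hasDerivAt_curve1 (hHu3.differentiable (by norm_num)) a g p
  have hHppD : ∀ p g : ℝ, HasDerivAt (fun q => Hp q g) (Hpp p g) p := fun p g =>
    hasDerivAt_curve1 (hGc.differentiable (by norm_num)) a g p
  have hHppgD : ∀ p g : ℝ, HasDerivAt (fun h => Hpp p h) (G3 (p, a, g)) g := fun p g =>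
    hasDerivAt_curve3 (hG2c.differentiable (by norm_num)) p a g
  have hH0D : ∀ g : ℝ, HasDerivAt H0 (H0d (0, a, g)) g := fun g =>
    hasDerivAt_curve3 (hHu3.differentiable (by norm_num)) 0 a g
  have hcurve : ∀ g : ℝ, Continuous (fun q : ℝ => (q, a, g)) := fun g =>
    continuous_id.prodMk (continuous_const.prodMk continuous_const)
  have hHpc : ∀ g, Continuous (fun q => Hp q g) := fun g =>
    hGc.continuous.comp (hcurve g)
  have hHppc : ∀ g, Continuous (fun q => Hpp q g) := fun g =>
    hG2c.continuous.comp (hcurve g)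
  have hHpderiv : ∀ p g : ℝ, deriv (fun q => H q a g) p = Hp p g := fun p g => (hHpD p g).deriv
  have hit2 : ∀ p g : ℝ, iteratedDeriv 2 (fun q => H q a g) p = Hpp p g := by
    intro p g
    rw [iteratedDeriv_succ, iteratedDeriv_one]
    have h1 : deriv (fun q => H q a g) = fun q => Hp q g := funext fun q => hHpderiv q g
    rw [h1]
    exact (hHppD p g).deriv
  have hHp0 : ∀ g : ℝ, Hp 0 g = 0 := fun g => (hHpderiv 0 g).symm.trans (hd0 a g)
  have hodd : ∀ p g : ℝ, Hp (-p) g = - Hp p g := by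
    intro p g
    have h2 : HasDerivAt (fun q : ℝ => H (-q) a g) (Hp (-p) g * (-1)) p :=
      (hHpD (-p) g).comp p (hasDerivAt_neg p)
    have h3 : (fun q : ℝ => H (-q) a g) = fun q => H q a g := funext fun q => heven q a g
    rw [h3] at h2
    have h4 := (hHpD p g).unique h2
    linarith
  have heven2 : ∀ p g : ℝ, Hpp (-p) g = Hpp p g := by
    intro p g
    have h2 : HasDerivAt (fun q : ℝ => Hp (-q) g) (Hpp (-p) g * (-1)) p :=
      (hHppD (-p) g).comp p (hasDerivAt_neg p)
    have h3 : (fun q : ℝ => Hp (-q) g) = fun q => - Hp q g := funext fun q => hodd q g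
    rw [h3] at h2
    have h4 := ((hHppD p g).neg).unique h2
    linarith
  -- the singular map derivatives
  set ψp : ℝ → ℝ → ℝ := fun p g => Hp |p| g / H0 g with hψpdef
  set ψpp : ℝ → ℝ → ℝ := fun p g => Real.sign p * Hpp p g / H0 g with hψppdef
  set Ee : ℝ → ℝ → ℝ := fun s g =>
    ((Real.sign s * G3 (s, a, g)) * H0 g - (Real.sign s * Hpp s g) * H0d (0, a, g)) / (H0 g) ^ 2
    with hEedef
  have hψp_ne : ∀ p g : ℝ, p ≠ 0 → HasDerivAt (fun q => TempleMap H q a g) (ψp p g) p := by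
    intro p g hp
    rcases lt_or_gt_of_ne hp with hneg | hpos
    · have h1 : HasDerivAt (fun q : ℝ => -((H q a g - H 0 a g) / H 0 a g))
          (-(Hp p g / H 0 a g)) p :=
        (((hHpD p g).sub_const (H 0 a g)).div_const (H 0 a g)).neg
      have heq : (fun q : ℝ => TempleMap H q a g)
          =ᶠ[𝓝 p] fun q => -((H q a g - H 0 a g) / H 0 a g) := by
        filter_upwards [Iio_mem_nhds hneg] with q hq
        simp only [TempleMap, Real.sign_of_neg hq, neg_one_mul, neg_div]
      have h2 := h1.congr_of_eventuallyEq heq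
      have hv : ψp p g = -(Hp p g / H 0 a g) := by
        simp only [hψpdef]
        rw [abs_of_neg hneg, hodd, neg_div]
      rwa [← hv] at h2
    · have h1 : HasDerivAt (fun q : ℝ => (H q a g - H 0 a g) / H 0 a g)
          (Hp p g / H 0 a g) p :=
        ((hHpD p g).sub_const (H 0 a g)).div_const (H 0 a g)
      have heq : (fun q : ℝ => TempleMap H q a g)
          =ᶠ[𝓝 p] fun q => (H q a g - H 0 a g) / H 0 a g := by
        filter_upwards [Ioi_mem_nhds hpos] with q hq
        simp [TempleMap, Real.sign_of_pos hq]
      have h2 := h1.congr_of_eventuallyEq heq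
      have hv : ψp p g = Hp p g / H 0 a g := by
        simp only [hψpdef]
        rw [abs_of_pos hpos]
      rwa [← hv] at h2
  have it2ψ : ∀ s h : ℝ, s ≠ 0 → iteratedDeriv 2 (fun q => TempleMap H q a h) s = ψpp s h := by
    intro s h hs
    rw [iteratedDeriv_succ, iteratedDeriv_one]
    have h1 : deriv (fun q => TempleMap H q a h) =ᶠ[𝓝 s] fun q => ψp q h := by
      filter_upwards [eventually_ne_nhds hs] with q hq
      exact (hψp_ne q h hq).deriv
    rw [h1.deriv_eq]
    rcases lt_or_gt_of_ne hs with hneg | hpos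
    · have h2 : HasDerivAt (fun q : ℝ => Hp (-q) h / H0 h) ((Hpp (-s) h * (-1)) / H0 h) s :=
        ((hHppD (-s) h).comp s (hasDerivAt_neg s)).div_const _
      have heq : (fun q : ℝ => ψp q h) =ᶠ[𝓝 s] fun q => Hp (-q) h / H0 h := by
        filter_upwards [Iio_mem_nhds hneg] with q hq
        simp only [hψpdef]
        rw [abs_of_neg hq]
      have h3 := h2.congr_of_eventuallyEq heq
      rw [h3.deriv]
      rw [heven2]
      simp only [hψppdef]
      rw [Real.sign_of_neg hneg]
      ring
    · have h2 : HasDerivAt (fun q : ℝ => Hp q h / H0 h) (Hpp s h / H0 h) s :=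
        (hHppD s h).div_const _
      have heq : (fun q : ℝ => ψp q h) =ᶠ[𝓝 s] fun q => Hp q h / H0 h := by
        filter_upwards [Ioi_mem_nhds hpos] with q hq
        simp only [hψpdef]
        rw [abs_of_pos hq]
      have h3 := h2.congr_of_eventuallyEq heq
      rw [h3.deriv]
      simp only [hψppdef]
      rw [Real.sign_of_pos hpos]
      ring
  have hEeD : ∀ s g : ℝ, H0 g ≠ 0 → HasDerivAt (fun h => ψpp s h) (Ee s g) g := by
    intro s g hne
    have h1 : HasDerivAt (fun h => Real.sign s * Hpp s h) (Real.sign s * G3 (s, a, g)) g :=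
      (hHppgD s g).const_mul _
    have h2 := h1.div (hH0D g) hne
    simp only [hψppdef, hEedef]
    simp only [mul_div_assoc] at h2 ⊢
    exact h2.congr_of_eventuallyEq (Filter.Eventually.of_forall fun x => (mul_div_assoc (G := ℝ) _ _ _).symm)
  have hEbound : ∀ s g : ℝ, s ≠ 0 → |s| ≤ Cbar → g ∈ Set.Icc gLo gHi → |Ee s g| ≤ B := by
    intro s g hs hsC hg
    have hne : H0 g ≠ 0 := (hHpos a g ha hg).ne'
    have h1 : (fun h => iteratedDeriv 2 (fun q => TempleMap H q a h) s) = fun h => ψpp s h :=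
      funext fun h => it2ψ s h hs
    have h2 := (hmixed s a g hsC ha hg).2
    rwa [h1, (hEeD s g hne).deriv] at h2
  -- quantitative bounds
  have habs_mem : ∀ s x : ℝ, x ∈ Set.uIcc 0 s → |x| ≤ |s| := by
    intro s x hx
    rcases le_total 0 s with h | h
    · rw [Set.uIcc_of_le h] at hx
      rw [abs_of_nonneg h]
      exact abs_le.mpr ⟨by linarith [hx.1], hx.2⟩
    · rw [Set.uIcc_of_ge h] at hx
      rw [abs_of_nonpos h]
      exact abs_le.mpr ⟨by linarith [hx.1, hx.2], by linarith [hx.1, hx.2]⟩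
  have hHppB : ∀ s g : ℝ, |s| ≤ P → g ∈ Set.Icc gLo gHi → |Hpp s g| ≤ C₀ := by
    intro s g hsP hg
    have h1 := hconv s a g hsP ha hg
    rw [hit2] at h1
    exact abs_le.mpr ⟨by linarith, h1.2⟩
  have hHpB : ∀ s g : ℝ, |s| ≤ P → g ∈ Set.Icc gLo gHi → |Hp s g| ≤ C₀ * |s| := by
    intro s g hsP hg
    have key := (convex_uIcc (0:ℝ) s).norm_image_sub_le_of_norm_hasDerivWithin_le
      (f := fun t => Hp t g) (f' := fun t => Hpp t g) (C := C₀)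
      (fun x _ => (hHppD x g).hasDerivWithinAt)
      (fun x hx => by
        rw [Real.norm_eq_abs]
        exact hHppB x g (le_trans (habs_mem s x hx) hsP) hg)
      Set.left_mem_uIcc Set.right_mem_uIcc
    simpa [hHp0] using key
  have hHB : ∀ q g : ℝ, |q| ≤ P → g ∈ Set.Icc gLo gHi →
      |H q a g - H 0 a g| ≤ C₀ * |q| * |q| := by
    intro q g hqP hg
    have key := (convex_uIcc (0:ℝ) q).norm_image_sub_le_of_norm_hasDerivWithin_le
      (f := fun t => H t a g) (f' := fun t => Hp t g) (C := C₀ * |q|)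
      (fun x _ => (hHpD x g).hasDerivWithinAt)
      (fun x hx => by
        rw [Real.norm_eq_abs]
        refine le_trans (hHpB x g (le_trans (habs_mem q x hx) hqP) hg) ?_
        exact mul_le_mul_of_nonneg_left (habs_mem q x hx) hC₀.le)
      Set.left_mem_uIcc Set.right_mem_uIcc
    simpa using key
  have hψ0 : ∀ g ∈ Set.Icc gLo gHi, HasDerivAt (fun q => TempleMap H q a g) (ψp 0 g) 0 := by
    intro g hg
    have hH0g := hHpos a g ha hg
    have hv : ψp 0 g = 0 := by
      simp only [hψpdef]
      rw [abs_zero, hHp0, zero_div]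
    rw [hv, hasDerivAt_iff_isLittleO]
    have hT0 : TempleMap H 0 a g = 0 := by simp [TempleMap]
    simp only [hT0, sub_zero, smul_zero]
    rw [Asymptotics.isLittleO_iff]
    intro c hc
    have hδ : 0 < min P (c * h0min / C₀) := lt_min hP (by positivity)
    filter_upwards [Metric.ball_mem_nhds (0:ℝ) hδ] with q hq
    rw [Metric.mem_ball, Real.dist_eq, sub_zero] at hq
    have hq1 : |q| ≤ P := le_of_lt (lt_of_lt_of_le hq (min_le_left _ _))
    have hq2 : |q| ≤ c * h0min / C₀ := le_of_lt (lt_of_lt_of_le hq (min_le_right _ _))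
    rw [le_div_iff₀ hC₀] at hq2
    have hsign : |Real.sign q| ≤ 1 := by
      rcases lt_trichotomy q 0 with h | h | h
      · rw [Real.sign_of_neg h]; norm_num
      · rw [h, Real.sign_zero]; norm_num
      · rw [Real.sign_of_pos h]; norm_num
    have h1 : |TempleMap H q a g| ≤ C₀ * |q| * |q| / h0min := by
      have e1 : |TempleMap H q a g| = |Real.sign q| * |H q a g - H 0 a g| / |H 0 a g| := by
        rw [TempleMap, abs_div, abs_mul]
      rw [e1, abs_of_pos hH0g]
      calc |Real.sign q| * |H q a g - H 0 a g| / H 0 a g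
          ≤ 1 * (C₀ * |q| * |q|) / h0min := by
            gcongr
            · exact hHB q g hq1 hg
            · exact (hH0le a g ha hg).1
        _ = C₀ * |q| * |q| / h0min := by ring
    rw [Real.norm_eq_abs, Real.norm_eq_abs]
    refine le_trans h1 ?_
    rw [div_le_iff₀ h0minpos]
    nlinarith [abs_nonneg q, mul_le_mul_of_nonneg_left hq2 (abs_nonneg q)]
  have hψall : ∀ g ∈ Set.Icc gLo gHi, ∀ p : ℝ,
      HasDerivAt (fun q => TempleMap H q a g) (ψp p g) p := by
    intro g hg p
    rcases eq_or_ne p 0 with rfl | hp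
    · exact hψ0 g hg
    · exact hψp_ne p g hp
  -- continuity helpers in the g-direction
  have hcurve3 : ∀ p : ℝ, Continuous (fun h : ℝ => (p, a, h)) := fun p =>
    continuous_const.prodMk (continuous_const.prodMk continuous_id)
  have hH0c : Continuous H0 := hHu3.continuous.comp (hcurve3 0)
  -- FTC in q on [pl, pr]
  have hψpc : ∀ g, Continuous (fun q => ψp q g) := by
    intro g
    simp only [hψpdef]
    exact ((hHpc g).comp continuous_abs).div_const _
  have hFTCq : ∀ g ∈ Set.Icc gLo gHi,
      (∫ q in pl..pr, ψp q g) = TempleMap H pr a g - TempleMap H pl a g := by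
    intro g hg
    exact intervalIntegral.integral_eq_sub_of_hasDerivAt
      (fun q _ => hψall g hg q) (((hψpc g)).intervalIntegrable _ _)
  -- profile identity for ψp
  have hFTCs : ∀ t g : ℝ, (∫ s in (0:ℝ)..t, Hpp s g / H0 g) = Hp t g / H0 g := by
    intro t g
    have h1 := intervalIntegral.integral_eq_sub_of_hasDerivAt
      (f := fun u => Hp u g / H0 g) (f' := fun u => Hpp u g / H0 g)
      (a := (0:ℝ)) (b := t)
      (fun s _ => (hHppD s g).div_const _)
      (((hHppc g).div_const _).intervalIntegrable _ _)
    rw [h1]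
    simp only [hHp0, zero_div, sub_zero]
  -- step 1 : g-variation of Hpp/H0
  have hstep1 : ∀ s : ℝ, 0 < s → s ≤ Cbar →
      |Hpp s gp / H0 gp - Hpp s gm / H0 gm| ≤ B * |gp - gm| := by
    intro s hs hsC
    have hsub : Set.uIcc gm gp ⊆ Set.Icc gLo gHi := Set.uIcc_subset_Icc hgm hgp
    have hG3cc : Continuous (fun g' : ℝ => G3 (s, a, g')) := hG3c.comp (hcurve3 s)
    have hH0dcc : Continuous (fun g' : ℝ => H0d (0, a, g')) := hH0dc.comp (hcurve3 0)
    have hHppcc : Continuous (fun g' : ℝ => Hpp s g') := hG2c.continuous.comp (hcurve3 s)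
    have hnum : Continuous (fun g' => (Real.sign s * G3 (s, a, g')) * H0 g'
        - (Real.sign s * Hpp s g') * H0d (0, a, g')) :=
      ((continuous_const.mul hG3cc).mul hH0c).sub ((continuous_const.mul hHppcc).mul hH0dcc)
    have hEcont : ContinuousOn (fun g' => Ee s g') (Set.uIcc gm gp) := by
      simp only [hEedef]
      exact hnum.continuousOn.div ((hH0c.pow 2).continuousOn)
        (fun x hx => pow_ne_zero 2 (hHpos a x ha (hsub hx)).ne')
    have hFTCg := intervalIntegral.integral_eq_sub_of_hasDerivAt
      (f := fun h => ψpp s h) (f' := fun h => Ee s h)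
      (fun x hx => hEeD s x (hHpos a x ha (hsub hx)).ne')
      (hEcont.intervalIntegrable)
    have hb := intervalIntegral.norm_integral_le_of_norm_le_const (C := B)
      (f := fun x => Ee s x) (a := gm) (b := gp)
      (fun x hx => by
        rw [Real.norm_eq_abs]
        exact hEbound s x hs.ne' (by rwa [abs_of_pos hs]) (hsub (Set.uIoc_subset_uIcc hx)))
    rw [hFTCg] at hb
    have hsgn : Real.sign s = 1 := Real.sign_of_pos hs
    simp only [hψppdef, hsgn, one_mul] at hb
    rw [Real.norm_eq_abs] at hb
    exact hb
  -- step 2 : g-variation of ψp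
  have hstep2 : ∀ q : ℝ, |q| ≤ Cbar → |ψp q gp - ψp q gm| ≤ B * |gp - gm| * |q| := by
    intro q hq
    have h0t : (0:ℝ) ≤ |q| := abs_nonneg q
    have hint1 : IntervalIntegrable (fun s => Hpp s gp / H0 gp) volume 0 |q| :=
      ((hHppc gp).div_const _).intervalIntegrable _ _
    have hint2 : IntervalIntegrable (fun s => Hpp s gm / H0 gm) volume 0 |q| :=
      ((hHppc gm).div_const _).intervalIntegrable _ _
    simp only [hψpdef]
    rw [← hFTCs |q| gp, ← hFTCs |q| gm, ← intervalIntegral.integral_sub hint1 hint2]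
    have hbound : ∀ x ∈ Set.uIoc (0:ℝ) |q|,
        ‖Hpp x gp / H0 gp - Hpp x gm / H0 gm‖ ≤ B * |gp - gm| := by
      intro x hx
      rw [Set.uIoc_of_le h0t] at hx
      rw [Real.norm_eq_abs]
      exact hstep1 x hx.1 (le_trans hx.2 hq)
    have hres := intervalIntegral.norm_integral_le_of_norm_le_const hbound
    rwa [Real.norm_eq_abs, sub_zero, abs_abs] at hres
  -- lower bound for Hp at gm
  have hPle : ∀ u : ℝ, 0 ≤ u → u ≤ P → c₀ * u ≤ Hp u gm := by
    intro u hu huP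
    have hmono3 : MonotoneOn (fun s => Hp s gm - c₀ * s) (Set.Icc 0 P) := by
      apply monotoneOn_of_deriv_nonneg (convex_Icc 0 P)
      · exact ((hHpc gm).sub (continuous_const.mul continuous_id)).continuousOn
      · intro x _
        exact (((hHppD x gm).sub ((hasDerivAt_id x).const_mul c₀)).differentiableAt).differentiableWithinAt
      · intro x hx
        rw [interior_Icc] at hx
        have hd : deriv (fun s => Hp s gm - c₀ * s) x = Hpp x gm - c₀ := by
          have h5 : HasDerivAt (fun s => Hp s gm - c₀ * s) (Hpp x gm - c₀ * 1) x :=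
            ((hHppD x gm).sub ((hasDerivAt_id x).const_mul c₀))
          simpa using h5.deriv
        rw [hd]
        have hxP : |x| ≤ P := abs_le.mpr ⟨by linarith [hx.1], hx.2.le⟩
        have h6 := (hconv x a gm hxP ha hgm).1
        rw [hit2] at h6
        linarith
    have h1 := hmono3 (Set.left_mem_Icc.mpr hP.le) (⟨hu, huP⟩ : u ∈ Set.Icc 0 P) hu
    simp only [hHp0, mul_zero, sub_zero] at h1
    linarith
  have hHplow : ∀ t : ℝ, 0 ≤ t → t ≤ Cbar → c₂ * min t P ≤ Hp t gm := by
    intro t ht htC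
    rcases le_total t P with h | h
    · rw [min_eq_left h]
      have h1 := hPle t ht h
      have h2 : c₂ ≤ c₀ := min_le_left _ _
      nlinarith
    · rw [min_eq_right h]
      have hHpP : 0 < Hp P gm := lt_of_lt_of_le (by positivity) (hPle P hP.le le_rfl)
      have hHpt : c₀ ≤ Hp t gm := by
        have habs : c₀ ≤ |Hp t gm| := by
          have h7 := (hmono t a gm (by rwa [abs_of_nonneg ht]) (by rwa [abs_of_nonneg ht]) ha hgm).1
          rwa [hHpderiv] at h7
        rcases le_abs.mp habs with h8 | h8
        · exact h8
        · exfalso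
          have hcont : ContinuousOn (fun s => Hp s gm) (Set.Icc P t) := (hHpc gm).continuousOn
          have h0mem : (0:ℝ) ∈ Set.Icc (Hp t gm) (Hp P gm) := ⟨by linarith, hHpP.le⟩
          obtain ⟨r, hrmem, hr⟩ := intermediate_value_Icc' h hcont h0mem
          have hr0 : 0 ≤ r := le_trans hP.le hrmem.1
          have h9 := (hmono r a gm (by rw [abs_of_nonneg hr0]; exact hrmem.1) (by rw [abs_of_nonneg hr0]; linarith [hrmem.2]) ha hgm).1
          rw [hHpderiv] at h9
          simp only at hr
          rw [hr] at h9
          simp only [abs_zero] at h9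
          linarith
      have hc₂P : c₂ * P ≤ c₀ := by
        have h2 : c₂ ≤ c₀ / P := min_le_right _ _
        have h3 : c₂ * P ≤ (c₀ / P) * P := by nlinarith
        rwa [div_mul_cancel₀ _ hP.ne'] at h3
      linarith
  have hψplow : ∀ q : ℝ, |q| ≤ Cbar → c₂ * min |q| P / h0max ≤ ψp q gm := by
    intro q hq
    have h1 := hHplow |q| (abs_nonneg q) hq
    have h2 : (0:ℝ) < H0 gm := hHpos a gm ha hgm
    have h3 : H0 gm ≤ h0max := (hH0le a gm ha hgm).2
    have hmin0 : 0 ≤ min |q| P := le_min (abs_nonneg q) hP.le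
    simp only [hψpdef]
    calc c₂ * min |q| P / h0max ≤ c₂ * min |q| P / H0 gm := by
          gcongr
      _ ≤ Hp |q| gm / H0 gm := by gcongr
  -- pointwise comparison
  have hmin_le : ∀ q : ℝ, |q| ≤ Cbar →
      B * |gp - gm| * |q| ≤ B * max 1 (Cbar / P) * |gp - gm| * min |q| P := by
    intro q hq
    rcases le_total |q| P with h | h
    · rw [min_eq_left h]
      have h1 : (1:ℝ) ≤ max 1 (Cbar / P) := le_max_left _ _
      have h2 : 0 ≤ B * |gp - gm| * |q| := by positivity
      calc B * |gp - gm| * |q| ≤ max 1 (Cbar / P) * (B * |gp - gm| * |q|) :=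
            le_mul_of_one_le_left h2 h1
        _ = B * max 1 (Cbar / P) * |gp - gm| * |q| := by ring
    · rw [min_eq_right h]
      have h1 : Cbar / P ≤ max 1 (Cbar / P) := le_max_right _ _
      have h2 : |q| ≤ Cbar / P * P := by
        rw [div_mul_cancel₀ _ hP.ne']
        exact hq
      calc B * |gp - gm| * |q| ≤ B * |gp - gm| * (Cbar / P * P) := by
            apply mul_le_mul_of_nonneg_left h2 (by positivity)
        _ = Cbar / P * (B * |gp - gm| * P) := by ring
        _ ≤ max 1 (Cbar / P) * (B * |gp - gm| * P) := by
            apply mul_le_mul_of_nonneg_right h1 (by positivity)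
        _ = B * max 1 (Cbar / P) * |gp - gm| * P := by ring
  have hpoint : ∀ q ∈ Set.Icc pl pr, |ψp q gp - ψp q gm| ≤ K * |gp - gm| * ψp q gm := by
    intro q hq
    have hqC : |q| ≤ Cbar := by
      have h1 := abs_le.mp hpl
      have h2 := abs_le.mp hpr
      exact abs_le.mpr ⟨by linarith [hq.1], by linarith [hq.2]⟩
    refine le_trans (hstep2 q hqC) (le_trans (hmin_le q hqC) ?_)
    have hψ := hψplow q hqC
    rw [div_le_iff₀ h0maxpos] at hψ
    have h4 : K * |gp - gm| * ψp q gm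
        = (B * max 1 (Cbar / P) * |gp - gm|) * (ψp q gm * h0max) / c₂ := by
      rw [hKdef]; ring
    rw [h4, le_div_iff₀ hc₂]
    calc B * max 1 (Cbar / P) * |gp - gm| * min |q| P * c₂
        = (B * max 1 (Cbar / P) * |gp - gm|) * (c₂ * min |q| P) := by ring
      _ ≤ (B * max 1 (Cbar / P) * |gp - gm|) * (ψp q gm * h0max) := by
          apply mul_le_mul_of_nonneg_left hψ (by positivity)
  -- assembly
  have hint_gm : IntervalIntegrable (fun q => ψp q gm) volume pl pr :=
    (hψpc gm).intervalIntegrable _ _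
  have hint_gp : IntervalIntegrable (fun q => ψp q gp) volume pl pr :=
    (hψpc gp).intervalIntegrable _ _
  have hFgm := hFTCq gm hgm
  have hFgp := hFTCq gp hgp
  have hnonneg : 0 ≤ TempleMap H pr a gm - TempleMap H pl a gm := by
    rw [← hFgm]
    apply intervalIntegral.integral_nonneg hle
    intro q hq
    have hqC : |q| ≤ Cbar := by
      have h1 := abs_le.mp hpl
      have h2 := abs_le.mp hpr
      exact abs_le.mpr ⟨by linarith [hq.1], by linarith [hq.2]⟩
    refine le_trans ?_ (hψplow q hqC)
    have hmin0 : 0 ≤ min |q| P := le_min (abs_nonneg q) hP.le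
    positivity
  have hdiff : |(TempleMap H pr a gp - TempleMap H pl a gp)
      - (TempleMap H pr a gm - TempleMap H pl a gm)|
      ≤ K * |gp - gm| * (TempleMap H pr a gm - TempleMap H pl a gm) := by
    rw [← hFgm, ← hFgp, ← intervalIntegral.integral_sub hint_gp hint_gm]
    refine le_trans (intervalIntegral.abs_integral_le_integral_abs hle) ?_
    have hintabs : IntervalIntegrable (fun q => |ψp q gp - ψp q gm|) volume pl pr :=
      (((hψpc gp).sub (hψpc gm)).abs).intervalIntegrable _ _
    have hintK : IntervalIntegrable (fun q => K * |gp - gm| * ψp q gm) volume pl pr :=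
      (continuous_const.mul (hψpc gm)).intervalIntegrable _ _
    refine le_trans (intervalIntegral.integral_mono_on hle hintabs hintK hpoint) ?_
    rw [intervalIntegral.integral_const_mul, hFgm]
  have habs3 := abs_sub_abs_le_abs_sub (TempleMap H pr a gp - TempleMap H pl a gp)
    (TempleMap H pr a gm - TempleMap H pl a gm)
  rw [abs_of_nonneg hnonneg] at habs3 ⊢
  linarith


end
end
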